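/- Let f ∈ L²(T²) with absolutely convergent Fourier series and f̂(0,0) = 0, and let N ∈ ℕ. Then ∑_{‖k‖≤N} |f̂(k)|² − ∑_{|k₁|≤N} |f̂(k₁,0)|² ≤ C·N² · max_{γ closed geodesic, |γ| ≤ 2N} |(1/|γ|)∫_γ f dH¹|², for a universal constant C. -/

import Mathlib

open MeasureTheory

/-- A function on `ℝ²` that is `ℤ²`-periodic, i.e. a function on the torus `T²`. -/
def Periodic2 (f : ℝ × ℝ → ℂ) : Prop :=
  ∀ x y : ℝ, f (x + 1, y) = f (x, y) ∧ f (x, y + 1) = f (x, y)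

/-- The Fourier coefficient `f̂(k) = ∫_{[0,1]²} f(x,y) e^{-2πi(k₁x + k₂y)}`. -/
noncomputable def fc (f : ℝ × ℝ → ℂ) (k : ℤ × ℤ) : ℂ :=
  ∫ x in (0:ℝ)..1, ∫ y in (0:ℝ)..1,
    f (x, y) * Complex.exp (-2 * (Real.pi : ℂ) * Complex.I * ((k.1 : ℂ) * x + (k.2 : ℂ) * y))

/-- The average of `f` over the closed geodesic `γ(t) = (a t, b t + c)`, `t ∈ [0,1]`:
`(1/|γ|) ∫_γ f dH¹ = ∫₀¹ f(γ(t)) dt`. -/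
noncomputable def geodAvg (f : ℝ × ℝ → ℂ) (a b : ℤ) (c : ℝ) : ℂ :=
  ∫ t in (0:ℝ)..1, f ((a : ℝ) * t, (b : ℝ) * t + c)

/-- The average of `f` over the general closed geodesic `γ(t) = p + t (a,b)`, `t ∈ [0,1]`. -/
noncomputable def geodAvgP (f : ℝ × ℝ → ℂ) (a b : ℤ) (p : ℝ × ℝ) : ℂ :=
  ∫ t in (0:ℝ)..1, f (p.1 + (a : ℝ) * t, p.2 + (b : ℝ) * t)

/-- The squared `L²(T²)` norm of `f`. -/
noncomputable def L2sq (f : ℝ × ℝ → ℂ) : ℝ :=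
  ∫ x in (0:ℝ)..1, ∫ y in (0:ℝ)..1, ‖f (x, y)‖ ^ 2

/-- The `L¹(T²)` norm of `f`. -/
noncomputable def L1norm (f : ℝ × ℝ → ℂ) : ℝ :=
  ∫ x in (0:ℝ)..1, ∫ y in (0:ℝ)..1, ‖f (x, y)‖

/-- Partial derivative in the first variable. -/
noncomputable def pd1 (f : ℝ × ℝ → ℂ) : ℝ × ℝ → ℂ :=
  fun v => deriv (fun x => f (x, v.2)) v.1

/-- Partial derivative in the second variable. -/
noncomputable def pd2 (f : ℝ × ℝ → ℂ) : ℝ × ℝ → ℂ :=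
  fun v => deriv (fun y => f (v.1, y)) v.2

/-- The mixed partial derivative `∂_α f` for the multi-index `α = (α₁, α₂)`. -/
noncomputable def pdMix (a1 a2 : ℕ) (f : ℝ × ℝ → ℂ) : ℝ × ℝ → ℂ :=
  pd1^[a1] (pd2^[a2] f)

/-- The squared `L²(T²)` norm of `∇f`. -/
noncomputable def gradL2sq (f : ℝ × ℝ → ℂ) : ℝ :=
  ∫ x in (0:ℝ)..1, ∫ y in (0:ℝ)..1, (‖pd1 f (x, y)‖ ^ 2 + ‖pd2 f (x, y)‖ ^ 2)

lemma swap_cont (Φ : ℝ → ℝ → ℂ) (h : Continuous (Function.uncurry Φ)) :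
    ∫ t in (0:ℝ)..1, ∫ c in (0:ℝ)..1, Φ t c = ∫ c in (0:ℝ)..1, ∫ t in (0:ℝ)..1, Φ t c := by
  simp only [intervalIntegral.integral_of_le (zero_le_one (α := ℝ))]
  apply MeasureTheory.integral_integral_swap
  rw [Measure.prod_restrict]
  have h1 : IntegrableOn (Function.uncurry Φ) (Set.Icc (0:ℝ) 1 ×ˢ Set.Icc (0:ℝ) 1) :=
    (h.continuousOn).integrableOn_compact (isCompact_Icc.prod isCompact_Icc)
  exact h1.mono_set (Set.prod_mono Set.Ioc_subset_Icc_self Set.Ioc_subset_Icc_self)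

lemma bound_of_periodic2 (f : ℝ × ℝ → ℂ) (hp : Periodic2 f) (hc : Continuous f) :
    ∃ M : ℝ, 0 ≤ M ∧ ∀ v : ℝ × ℝ, ‖f v‖ ≤ M := by
  obtain ⟨C, hC⟩ := (isCompact_Icc.prod isCompact_Icc).exists_bound_of_continuousOn
    (s := Set.Icc (0:ℝ) 1 ×ˢ Set.Icc (0:ℝ) 1) hc.continuousOn
  have hshift1 : ∀ (n : ℤ) (x y : ℝ), f (x + n, y) = f (x, y) := by
    intro n x y
    have hper : Function.Periodic (fun x => f (x, y)) 1 := fun x => (hp x y).1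
    simpa using (hper.int_mul n) x
  have hshift2 : ∀ (n : ℤ) (x y : ℝ), f (x, y + n) = f (x, y) := by
    intro n x y
    have hper : Function.Periodic (fun y => f (x, y)) 1 := fun y => (hp x y).2
    simpa using (hper.int_mul n) y
  refine ⟨max C 0, le_max_right _ _, ?_⟩
  rintro ⟨x, y⟩
  have h1 : f (x, y) = f (Int.fract x, Int.fract y) := by
    conv_lhs => rw [show (x, y) = (Int.fract x + (⌊x⌋ : ℝ), Int.fract y + (⌊y⌋ : ℝ)) by
      rw [Int.fract, Int.fract]; exact Prod.ext (by ring) (by ring)]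
    rw [hshift1, hshift2]
  rw [h1]
  refine le_max_of_le_left (hC _ ?_)
  exact ⟨⟨Int.fract_nonneg x, (Int.fract_lt_one x).le⟩,
    ⟨Int.fract_nonneg y, (Int.fract_lt_one y).le⟩⟩

lemma fc_eq_integral (f : ℝ × ℝ → ℂ) (hp : Periodic2 f) (hc : Continuous f)
    (k : ℤ × ℤ) (a b : ℤ) (ha : a ≠ 0) (hk : k.1 * a + k.2 * b = 0) :
    fc f k = ∫ c in (0:ℝ)..1,
      Complex.exp (-2 * (Real.pi : ℂ) * Complex.I * ((k.2 : ℂ) * c)) * geodAvg f a b c := by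
  set F : ℝ → ℝ → ℂ := fun x y =>
    f (x, y) * Complex.exp (-2 * (Real.pi : ℂ) * Complex.I * ((k.1 : ℂ) * x + (k.2 : ℂ) * y))
    with hF
  have hFc : Continuous (Function.uncurry F) := by
    apply Continuous.mul
    · exact hc
    · apply Complex.continuous_exp.comp
      fun_prop
  have hFx : ∀ x y, F (x + 1) y = F x y := by
    intro x y
    simp only [hF]
    rw [(hp x y).1]
    congr 1
    have h1 : (-2 * (Real.pi:ℂ) * Complex.I * ((k.1:ℂ) * ((x:ℝ)+1 : ℝ) + (k.2:ℂ) * y))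
        = (-2 * (Real.pi:ℂ) * Complex.I * ((k.1:ℂ) * x + (k.2:ℂ) * y))
          + ((-k.1 : ℤ) : ℂ) * (2 * (Real.pi:ℂ) * Complex.I) := by
      push_cast; ring
    rw [h1, Complex.exp_add, Complex.exp_int_mul_two_pi_mul_I, mul_one]
  have hFy : ∀ x y, F x (y + 1) = F x y := by
    intro x y
    simp only [hF]
    rw [(hp x y).2]
    congr 1
    have h1 : (-2 * (Real.pi:ℂ) * Complex.I * ((k.1:ℂ) * x + (k.2:ℂ) * ((y:ℝ)+1 : ℝ)))
        = (-2 * (Real.pi:ℂ) * Complex.I * ((k.1:ℂ) * x + (k.2:ℂ) * y))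
          + ((-k.2 : ℤ) : ℂ) * (2 * (Real.pi:ℂ) * Complex.I) := by
      push_cast; ring
    rw [h1, Complex.exp_add, Complex.exp_int_mul_two_pi_mul_I, mul_one]
  set H : ℝ → ℂ := fun x => ∫ y in (0:ℝ)..1, F x y with hH
  have hHcont : Continuous H :=
    intervalIntegral.continuous_parametric_intervalIntegral_of_continuous' hFc 0 1
  have hHper : Function.Periodic H 1 := by
    intro x
    simp only [hH, hFx]
  have haR : ((a:ℝ)) ≠ 0 := Int.cast_ne_zero.mpr ha
  have haC : ((a:ℂ)) ≠ 0 := Int.cast_ne_zero.mpr ha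
  -- step 3
  have step3 : (∫ t in (0:ℝ)..1, H ((a:ℝ) * t)) = ∫ x in (0:ℝ)..1, H x := by
    rw [intervalIntegral.integral_comp_mul_left H haR]
    have h2 : (∫ x in ((a:ℝ) * 0)..((a:ℝ) * 1), H x) = a • ∫ x in (0:ℝ)..1, H x := by
      have := hHper.intervalIntegral_add_zsmul_eq a 0
        (fun t₁ t₂ => hHcont.intervalIntegrable t₁ t₂)
      simpa using this
    rw [h2]
    rw [zsmul_eq_mul, Complex.real_smul]
    push_cast
    field_simp
  have step4 : ∀ t : ℝ, H ((a:ℝ) * t) = ∫ c in (0:ℝ)..1, F ((a:ℝ)*t) ((b:ℝ)*t + c) := by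
    intro t
    have hGper : Function.Periodic (fun y => F ((a:ℝ)*t) y) 1 := fun y => hFy _ y
    have h1 : ∀ c : ℝ, F ((a:ℝ)*t) ((b:ℝ)*t + c)
        = (fun y => F ((a:ℝ)*t) y) (c + (b:ℝ)*t) := fun c => by rw [add_comm]
    symm
    simp only [h1]
    rw [intervalIntegral.integral_comp_add_right (fun y => F ((a:ℝ)*t) y) ((b:ℝ)*t)]
    rw [zero_add, (by ring : (1:ℝ) + (b:ℝ)*t = (b:ℝ)*t + 1)]
    rw [hGper.intervalIntegral_add_eq ((b:ℝ)*t) 0, zero_add]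
  have hΦc : Continuous (Function.uncurry fun t c => F ((a:ℝ)*t) ((b:ℝ)*t + c)) := by
    have h1 : Function.uncurry (fun t c => F ((a:ℝ)*t) ((b:ℝ)*t + c))
        = (Function.uncurry F) ∘ (fun p : ℝ × ℝ => ((a:ℝ)*p.1, (b:ℝ)*p.1 + p.2)) := rfl
    rw [h1]
    exact hFc.comp (by fun_prop)
  have step6 : ∀ c : ℝ, (∫ t in (0:ℝ)..1, F ((a:ℝ)*t) ((b:ℝ)*t + c))
      = Complex.exp (-2 * (Real.pi:ℂ) * Complex.I * ((k.2:ℂ) * c)) * geodAvg f a b c := by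
    intro c
    have hkC : (k.1:ℂ) * a + (k.2:ℂ) * b = 0 := by exact_mod_cast hk
    have h1 : ∀ t : ℝ, F ((a:ℝ)*t) ((b:ℝ)*t + c)
        = Complex.exp (-2 * (Real.pi:ℂ) * Complex.I * ((k.2:ℂ)*c)) * f ((a:ℝ)*t, (b:ℝ)*t + c) := by
      intro t
      simp only [hF]
      rw [mul_comm]
      congr 2
      push_cast
      linear_combination (-2 * (Real.pi:ℂ) * Complex.I * (t:ℂ)) * hkC
    simp only [h1]
    rw [intervalIntegral.integral_const_mul]
    rfl
  calc fc f k = ∫ x in (0:ℝ)..1, H x := rfl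
    _ = ∫ t in (0:ℝ)..1, H ((a:ℝ) * t) := step3.symm
    _ = ∫ t in (0:ℝ)..1, ∫ c in (0:ℝ)..1, F ((a:ℝ)*t) ((b:ℝ)*t + c) := by
        simp only [step4]
    _ = ∫ c in (0:ℝ)..1, ∫ t in (0:ℝ)..1, F ((a:ℝ)*t) ((b:ℝ)*t + c) :=
        swap_cont _ hΦc
    _ = ∫ c in (0:ℝ)..1,
        Complex.exp (-2 * (Real.pi:ℂ) * Complex.I * ((k.2:ℂ) * c)) * geodAvg f a b c := by
        simp only [step6]

lemma fc_sq_le (f : ℝ × ℝ → ℂ) (hp : Periodic2 f) (hc : Continuous f)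
    (k : ℤ × ℤ) (a b : ℤ) (ha : a ≠ 0) (hk : k.1 * a + k.2 * b = 0)
    {s : ℝ} (hs0 : 0 ≤ s) (hub : ∀ c : ℝ, ‖geodAvg f a b c‖ ^ 2 ≤ s) :
    ‖fc f k‖ ^ 2 ≤ s := by
  have h1 : ‖fc f k‖ ≤ Real.sqrt s * |1 - (0:ℝ)| := by
    rw [fc_eq_integral f hp hc k a b ha hk]
    apply intervalIntegral.norm_integral_le_of_norm_le_const
    intro c _
    rw [norm_mul]
    have he : ‖Complex.exp (-2 * (Real.pi:ℂ) * Complex.I * ((k.2:ℂ) * c))‖ = 1 := by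
      have h2 : (-2 * (Real.pi:ℂ) * Complex.I * ((k.2:ℂ) * c))
          = ((-2 * Real.pi * (k.2:ℝ) * c : ℝ) : ℂ) * Complex.I := by push_cast; ring
      rw [h2]
      exact Complex.norm_exp_ofReal_mul_I _
    rw [he, one_mul]
    nlinarith [hub c, norm_nonneg (geodAvg f a b c), Real.sq_sqrt hs0, Real.sqrt_nonneg s]
  calc ‖fc f k‖ ^ 2 ≤ (Real.sqrt s * |1 - (0:ℝ)|) ^ 2 := by
        apply pow_le_pow_left₀ (norm_nonneg _) h1
    _ = s := by
        rw [show |1 - (0:ℝ)| = 1 by norm_num, mul_one, Real.sq_sqrt hs0]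

/-- for mean-zero `f` with absolutely convergent Fourier series,
`∑_{‖k‖≤N} |f̂(k)|² − ∑_{|k₁|≤N} |f̂(k₁,0)|² ≤ C N² max_{|γ| ≤ 2N} |(1/|γ|)∫_γ f|²`. -/
theorem stmt16 :
    ∃ C : ℝ, 0 < C ∧
      ∀ (f : ℝ × ℝ → ℝ), Periodic2 (fun v => (f v : ℂ)) → Continuous f →
        Summable (fun k : ℤ × ℤ => ‖fc (fun v => (f v : ℂ)) k‖) →
        fc (fun v => (f v : ℂ)) (0, 0) = 0 →
        ∀ N : ℕ,
          (∑' k : {k : ℤ × ℤ // (k.1 : ℝ) ^ 2 + (k.2 : ℝ) ^ 2 ≤ (N : ℝ) ^ 2},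
              ‖fc (fun v => (f v : ℂ)) k.val‖ ^ 2) -
            (∑' k : {k : ℤ // |k| ≤ (N : ℤ)}, ‖fc (fun v => (f v : ℂ)) (k.val, 0)‖ ^ 2) ≤
          C * (N : ℝ) ^ 2 *
            sSup {v : ℝ | ∃ (a b : ℤ) (c : ℝ), Int.gcd a b = 1 ∧
              Real.sqrt ((a : ℝ) ^ 2 + (b : ℝ) ^ 2) ≤ 2 * N ∧
              v = ‖geodAvg (fun v => (f v : ℂ)) a b c‖ ^ 2} := by
  refine ⟨9, by norm_num, ?_⟩
  intro f hper hcont _hsum hzero N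
  set fC : ℝ × ℝ → ℂ := fun v => (f v : ℂ) with hfC
  have hcC : Continuous fC := Complex.continuous_ofReal.comp hcont
  set S : Set ℝ := {v : ℝ | ∃ (a b : ℤ) (c : ℝ), Int.gcd a b = 1 ∧
      Real.sqrt ((a : ℝ) ^ 2 + (b : ℝ) ^ 2) ≤ 2 * N ∧
      v = ‖geodAvg fC a b c‖ ^ 2} with hSdef
  rcases Nat.eq_zero_or_pos N with hN | hN
  · -- N = 0
    subst hN
    have h1 : ∀ k : {k : ℤ × ℤ // (k.1 : ℝ) ^ 2 + (k.2 : ℝ) ^ 2 ≤ ((0:ℕ) : ℝ) ^ 2},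
        ‖fc fC k.val‖ ^ 2 = 0 := by
      rintro ⟨⟨k1, k2⟩, hk⟩
      push_cast at hk
      have h1 : (k1 : ℝ) = 0 := by nlinarith [sq_nonneg (k1:ℝ), sq_nonneg (k2:ℝ)]
      have h2 : (k2 : ℝ) = 0 := by nlinarith [sq_nonneg (k1:ℝ), sq_nonneg (k2:ℝ)]
      have h1' : k1 = 0 := by exact_mod_cast h1
      have h2' : k2 = 0 := by exact_mod_cast h2
      subst h1'; subst h2'
      have hz : fc fC 0 = 0 := hzero
      simp [hz, hzero]
    rw [tsum_congr h1, tsum_zero]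
    have h2 : 0 ≤ ∑' k : {k : ℤ // |k| ≤ ((0:ℕ) : ℤ)}, ‖fc fC (k.val, 0)‖ ^ 2 :=
      tsum_nonneg (fun k => pow_nonneg (norm_nonneg _) 2)
    have h3 : (9:ℝ) * ((0:ℕ) : ℝ) ^ 2 * sSup S = 0 := by norm_num
    linarith
  · -- N ≥ 1
    have hN1 : (1:ℝ) ≤ (N:ℝ) := by exact_mod_cast hN
    have hBdd : BddAbove S := by
      obtain ⟨M, hM0, hMb⟩ := bound_of_periodic2 fC hper hcC
      refine ⟨M ^ 2, ?_⟩
      rintro v ⟨a, b, c, -, -, rfl⟩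
      have hg : ‖geodAvg fC a b c‖ ≤ M := by
        have h := intervalIntegral.norm_integral_le_of_norm_le_const
          (a := 0) (b := 1) (C := M) (f := fun t => fC ((a:ℝ)*t, (b:ℝ)*t + c))
          (fun t _ => hMb _)
        simpa [geodAvg] using h
      exact pow_le_pow_left₀ (norm_nonneg _) hg 2
    have hmem1 : ‖geodAvg fC 1 0 0‖ ^ 2 ∈ S := by
      refine ⟨1, 0, 0, by norm_num [Int.gcd], ?_, rfl⟩
      push_cast
      rw [one_pow]
      norm_num [Real.sqrt_one]
      linarith
    have hs0 : (0:ℝ) ≤ sSup S := le_trans (pow_nonneg (norm_nonneg _) 2) (le_csSup hBdd hmem1)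
    have hterm : ∀ k : ℤ × ℤ, k.2 ≠ 0 → (k.1:ℝ)^2 + (k.2:ℝ)^2 ≤ (N:ℝ)^2 →
        ‖fc fC k‖ ^ 2 ≤ sSup S := by
      intro k hk2 hkN
      have hgpos : 0 < Int.gcd k.1 k.2 := Int.gcd_pos_iff.mpr (Or.inr hk2)
      set g : ℤ := (Int.gcd k.1 k.2 : ℤ) with hgdef
      have hg1 : 1 ≤ g := by rw [hgdef]; exact_mod_cast hgpos
      have hdvd1 : g ∣ k.1 := Int.gcd_dvd_left _ _
      have hdvd2 : g ∣ k.2 := Int.gcd_dvd_right _ _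
      set a : ℤ := k.2 / g with hadef
      set b : ℤ := -(k.1 / g) with hbdef
      have hk2eq : a * g = k.2 := Int.ediv_mul_cancel hdvd2
      have hk1eq : (k.1 / g) * g = k.1 := Int.ediv_mul_cancel hdvd1
      have ha : a ≠ 0 := by
        intro h; apply hk2; rw [← hk2eq, h, zero_mul]
      have hgcdab : Int.gcd a b = 1 := by
        have h1 : Int.gcd a b = Int.gcd (k.2 / g) (k.1 / g) := by
          rw [hadef, hbdef]; simp [Int.gcd, Int.natAbs_neg]
        rw [h1, Int.gcd_comm]
        exact Int.gcd_div_gcd_div_gcd hgpos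
      have hortho : k.1 * a + k.2 * b = 0 := by
        rw [hadef, hbdef]
        linear_combination (k.1 / g) * hk2eq - (k.2 / g) * hk1eq
      apply fc_sq_le fC hper hcC k a b ha hortho hs0
      intro c
      apply le_csSup hBdd
      refine ⟨a, b, c, hgcdab, ?_, rfl⟩
      have hg2 : (1:ℤ) ≤ g ^ 2 := by nlinarith
      have hga : a ^ 2 ≤ k.2 ^ 2 := by
        calc a^2 = a^2 * 1 := (mul_one _).symm
          _ ≤ a^2 * g^2 := mul_le_mul_of_nonneg_left hg2 (sq_nonneg a)
          _ = (a*g)^2 := by ring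
          _ = k.2^2 := by rw [hk2eq]
      have hgb : b ^ 2 ≤ k.1 ^ 2 := by
        calc b^2 = (k.1/g)^2 * 1 := by rw [hbdef]; ring
          _ ≤ (k.1/g)^2 * g^2 := mul_le_mul_of_nonneg_left hg2 (sq_nonneg _)
          _ = ((k.1/g)*g)^2 := by ring
          _ = k.1^2 := by rw [hk1eq]
      have hga' : (a:ℝ) ^ 2 ≤ (k.2:ℝ) ^ 2 := by exact_mod_cast hga
      have hgb' : (b:ℝ) ^ 2 ≤ (k.1:ℝ) ^ 2 := by exact_mod_cast hgb
      have hR : (a:ℝ) ^ 2 + (b:ℝ) ^ 2 ≤ (N:ℝ) ^ 2 := by linarith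
      calc Real.sqrt ((a:ℝ) ^ 2 + (b:ℝ) ^ 2) ≤ Real.sqrt ((N:ℝ) ^ 2) :=
            Real.sqrt_le_sqrt hR
        _ = (N:ℝ) := Real.sqrt_sq (Nat.cast_nonneg N)
        _ ≤ 2 * (N:ℝ) := by linarith
    set Q : Finset (ℤ × ℤ) := (Finset.Icc (-(N:ℤ), -(N:ℤ)) ((N:ℤ), (N:ℤ))).filter
        (fun k => (k.1:ℝ)^2 + (k.2:ℝ)^2 ≤ (N:ℝ)^2) with hQdef
    have habs : ∀ (m : ℤ), (m:ℝ)^2 ≤ (N:ℝ)^2 → -(N:ℤ) ≤ m ∧ m ≤ (N:ℤ) := by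
      intro m hm
      have h1 : |(m:ℝ)| ≤ (N:ℝ) := by
        have := Real.sqrt_le_sqrt hm
        rwa [Real.sqrt_sq_eq_abs, Real.sqrt_sq (Nat.cast_nonneg N)] at this
      have h2 : |m| ≤ (N:ℤ) := by exact_mod_cast h1
      exact abs_le.mp h2
    have hQmem : ∀ k : ℤ × ℤ, k ∈ Q ↔ (k.1:ℝ)^2 + (k.2:ℝ)^2 ≤ (N:ℝ)^2 := by
      intro k
      rw [hQdef, Finset.mem_filter]
      constructor
      · exact fun h => h.2
      · intro h
        refine ⟨Finset.mem_Icc.mpr ?_, h⟩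
        have h1 := habs k.1 (by nlinarith [sq_nonneg (k.2:ℝ)])
        have h2 := habs k.2 (by nlinarith [sq_nonneg (k.1:ℝ)])
        exact ⟨⟨h1.1, h2.1⟩, ⟨h1.2, h2.2⟩⟩
    haveI instQ : Fintype {k : ℤ × ℤ // (k.1:ℝ)^2 + (k.2:ℝ)^2 ≤ (N:ℝ)^2} :=
      Fintype.subtype Q (by exact fun x => hQmem x)
    have hsum1 : (∑' k : {k : ℤ × ℤ // (k.1:ℝ)^2 + (k.2:ℝ)^2 ≤ (N:ℝ)^2}, ‖fc fC k.val‖^2)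
        = ∑ k ∈ Q, ‖fc fC k‖^2 := by
      rw [tsum_fintype]
      exact (Finset.sum_subtype Q hQmem (fun k => ‖fc fC k‖^2)).symm
    set Q1 : Finset ℤ := Finset.Icc (-(N:ℤ)) (N:ℤ) with hQ1def
    have hQ1mem : ∀ k : ℤ, k ∈ Q1 ↔ |k| ≤ (N:ℤ) := by
      intro k; rw [hQ1def, Finset.mem_Icc, ← abs_le]
    haveI instQ1 : Fintype {k : ℤ // |k| ≤ (N:ℤ)} := Fintype.ofFinset (p := {k : ℤ | |k| ≤ (N:ℤ)}) Q1 (by exact fun x => hQ1mem x)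
    have hsum2 : (∑' k : {k : ℤ // |k| ≤ (N:ℤ)}, ‖fc fC (k.val, 0)‖^2)
        = ∑ k ∈ Q1, ‖fc fC (k, 0)‖^2 := by
      rw [tsum_fintype]
      exact (Finset.sum_subtype Q1 hQ1mem (fun k => ‖fc fC (k, 0)‖^2)).symm
    have haxis : ∑ k ∈ Q.filter (fun k => k.2 = 0), ‖fc fC k‖^2
        = ∑ k ∈ Q1, ‖fc fC (k, 0)‖^2 := by
      apply Finset.sum_nbij' (i := fun k : ℤ × ℤ => k.1) (j := fun k : ℤ => ((k, 0) : ℤ × ℤ))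
      · intro k hk
        rw [Finset.mem_filter] at hk
        rw [hQmem] at hk
        rw [hQ1mem]
        have h1 := habs k.1 (by nlinarith [sq_nonneg (k.2:ℝ), hk.1])
        exact abs_le.mpr h1
      · intro m hm
        rw [hQ1mem] at hm
        rw [Finset.mem_filter, hQmem]
        have h1 : (m:ℝ)^2 ≤ (N:ℝ)^2 := by
          have h2 : |(m:ℝ)| ≤ (N:ℝ) := by
            rw [← Int.cast_abs]; exact_mod_cast hm
          nlinarith [abs_nonneg (m:ℝ), sq_abs (m:ℝ), h2]
        constructor
        · simp only []
          push_cast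
          nlinarith
        · rfl
      · rintro ⟨k1, k2⟩ hk
        rw [Finset.mem_filter] at hk
        have h0 : k2 = 0 := hk.2
        simp [h0]
      · intro m hm; rfl
      · rintro ⟨k1, k2⟩ hk
        rw [Finset.mem_filter] at hk
        have h0 : k2 = 0 := hk.2
        simp [h0]
    have hsplit := Finset.sum_filter_add_sum_filter_not Q (fun k => k.2 = 0)
      (fun k => ‖fc fC k‖^2)
    have hcard : ((Q.filter (fun k => ¬ k.2 = 0)).card : ℝ) ≤ 9 * (N:ℝ)^2 := by
      have h1 : (Q.filter (fun k => ¬ k.2 = 0)).card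
          ≤ (Finset.Icc (-(N:ℤ), -(N:ℤ)) ((N:ℤ), (N:ℤ))).card := by
        apply Finset.card_le_card
        intro k hk
        have h2 : k ∈ Q := Finset.filter_subset _ _ hk
        rw [hQdef] at h2
        exact Finset.filter_subset _ _ h2
      have h2 : (Finset.Icc (-(N:ℤ), -(N:ℤ)) ((N:ℤ), (N:ℤ))).card = (2*N+1)*(2*N+1) := by
        rw [Finset.card_Icc_prod]
        simp only [Int.card_Icc]
        rw [show (N:ℤ) + 1 - -(N:ℤ) = ((2*N+1 : ℕ) : ℤ) by push_cast; ring, Int.toNat_natCast]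
      have h3 : ((Q.filter (fun k => ¬ k.2 = 0)).card : ℝ) ≤ ((2*N+1)*(2*N+1) : ℕ) := by
        exact_mod_cast h2 ▸ h1
      have h4 : (((2*N+1)*(2*N+1) : ℕ) : ℝ) ≤ 9 * (N:ℝ)^2 := by
        push_cast
        nlinarith
      linarith
    have hnon : ∑ k ∈ Q.filter (fun k => ¬ k.2 = 0), ‖fc fC k‖^2 ≤ 9 * (N:ℝ)^2 * sSup S := by
      calc ∑ k ∈ Q.filter (fun k => ¬ k.2 = 0), ‖fc fC k‖^2
          ≤ (Q.filter (fun k => ¬ k.2 = 0)).card • sSup S := by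
            apply Finset.sum_le_card_nsmul
            intro k hk
            rw [Finset.mem_filter] at hk
            exact hterm k hk.2 ((hQmem k).mp hk.1)
        _ = ((Q.filter (fun k => ¬ k.2 = 0)).card : ℝ) * sSup S := nsmul_eq_mul _ _
        _ ≤ 9 * (N:ℝ)^2 * sSup S := mul_le_mul_of_nonneg_right hcard hs0
    rw [hsum1, hsum2, ← haxis]
    have hfin : ∑ k ∈ Q, ‖fc fC k‖^2 - ∑ k ∈ Q.filter (fun k => k.2 = 0), ‖fc fC k‖^2
        = ∑ k ∈ Q.filter (fun k => ¬ k.2 = 0), ‖fc fC k‖^2 := by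
      rw [← hsplit]; ring
    rw [hfin]
    exact hnon
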